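/- arXiv:2304.13793 — 2 statements merged into one kernel-verified Lean document; each statement's English description precedes it below -/
import Mathlib

section
/- For a symmetric positive definite matrix $\Gamma \in \mathbb{R}^{\kappa\times\kappa}$ and $p \in [1,\infty]$ with conjugate exponent $p_* = p/(p-1)$, we have $\min_{\|h\|_p = 1} h^T \Gamma h = \left[\max_{\|g\|_{p_*} \le 1} g^T \Gamma^{-1} g\right]^{-1}$. -/
open Matrix
open scoped ENNReal

/-- The `ℓ_p` norm of a vector in `ℝ^κ`, via the `PiLp` norm. -/
noncomputable def lpNorm (p : ℝ≥0∞) [Fact (1 ≤ p)] {κ : ℕ} (x : Fin κ → ℝ) : ℝ :=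
  ‖(WithLp.equiv p (Fin κ → ℝ)).symm x‖

namespace StmtAux

variable {κ : ℕ}

lemma lpNorm_nonneg (p : ℝ≥0∞) [Fact (1 ≤ p)] (x : Fin κ → ℝ) : 0 ≤ lpNorm p x :=
  norm_nonneg _

lemma toReal_pos {p : ℝ≥0∞} [Fact (1 ≤ p)] (hp : p ≠ ∞) : 0 < p.toReal :=
  ENNReal.toReal_pos (zero_lt_one.trans_le (Fact.out : (1:ℝ≥0∞) ≤ p)).ne' hp

lemma lpNorm_eq_sum {p : ℝ≥0∞} [Fact (1 ≤ p)] (hp : p ≠ ∞) (x : Fin κ → ℝ) :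
    lpNorm p x = (∑ i, |x i| ^ p.toReal) ^ (1 / p.toReal) := by
  rw [lpNorm, PiLp.norm_eq_sum (toReal_pos hp)]
  simp [Real.norm_eq_abs]

lemma lpNorm_one (x : Fin κ → ℝ) : lpNorm 1 x = ∑ i, |x i| := by
  rw [lpNorm_eq_sum (by simp)]
  simp

lemma lpNorm_top (x : Fin κ → ℝ) : lpNorm ∞ x = ⨆ i, |x i| := by
  rw [lpNorm, PiLp.norm_eq_ciSup]
  simp [Real.norm_eq_abs]

lemma lpNorm_smul (p : ℝ≥0∞) [Fact (1 ≤ p)] (c : ℝ) (x : Fin κ → ℝ) :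
    lpNorm p (c • x) = |c| * lpNorm p x := by
  rw [lpNorm, lpNorm, WithLp.equiv_symm_apply, WithLp.toLp_smul, norm_smul, Real.norm_eq_abs]

lemma lpNorm_eq_zero {p : ℝ≥0∞} [Fact (1 ≤ p)] {x : Fin κ → ℝ} :
    lpNorm p x = 0 ↔ x = 0 := by
  rw [lpNorm, norm_eq_zero]
  constructor
  · intro h
    simpa using congrArg (WithLp.equiv p (Fin κ → ℝ)) h
  · rintro rfl
    rfl

lemma lpNorm_zero {p : ℝ≥0∞} [Fact (1 ≤ p)] : lpNorm p (0 : Fin κ → ℝ) = 0 :=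
  lpNorm_eq_zero.mpr rfl

lemma lpNorm_pos {p : ℝ≥0∞} [Fact (1 ≤ p)] {x : Fin κ → ℝ} (hx : x ≠ 0) :
    0 < lpNorm p x :=
  lt_of_le_of_ne (lpNorm_nonneg p x) (fun h => hx (lpNorm_eq_zero.mp h.symm))

lemma lpNorm_continuous (p : ℝ≥0∞) [Fact (1 ≤ p)] :
    Continuous fun x : Fin κ → ℝ => lpNorm p x :=
  ((PiLp.continuousLinearEquiv p ℝ (fun _ : Fin κ => ℝ)).symm.continuous).norm

lemma isCompact_ball (p : ℝ≥0∞) [Fact (1 ≤ p)] :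
    IsCompact {x : Fin κ → ℝ | lpNorm p x ≤ 1} := by
  have h : IsCompact ((⇑(PiLp.continuousLinearEquiv p ℝ (fun _ : Fin κ => ℝ))) ''
      Metric.closedBall 0 1) :=
    (isCompact_closedBall (0 : PiLp p (fun _ : Fin κ => ℝ)) 1).image
      (PiLp.continuousLinearEquiv p ℝ _).continuous
  convert h using 1
  ext x
  constructor
  · intro hx
    exact ⟨(WithLp.equiv p (Fin κ → ℝ)).symm x, by simpa [lpNorm, mem_closedBall_zero_iff] using hx, rfl⟩
  · rintro ⟨y, hy, rfl⟩
    simpa [lpNorm, PiLp.coe_continuousLinearEquiv, mem_closedBall_zero_iff] using hy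

lemma conj_cases {p q : ℝ≥0∞} [Fact (1 ≤ p)] [Fact (1 ≤ q)] (hpq : p⁻¹ + q⁻¹ = 1) :
    (p = 1 ∧ q = ∞) ∨ (p = ∞ ∧ q = 1) ∨
      (p ≠ ∞ ∧ q ≠ ∞ ∧ p.toReal.HolderConjugate q.toReal) := by
  have hp1 : (1:ℝ≥0∞) ≤ p := Fact.out
  have hq1 : (1:ℝ≥0∞) ≤ q := Fact.out
  by_cases hp : p = 1
  · subst hp
    left
    refine ⟨rfl, ?_⟩
    have : (1:ℝ≥0∞)⁻¹ + q⁻¹ = 1⁻¹ + 0 := by simpa using hpq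
    have := (ENNReal.add_right_inj (by simp)).mp this
    simpa [ENNReal.inv_eq_zero] using this
  by_cases hq : q = 1
  · subst hq
    right; left
    refine ⟨?_, rfl⟩
    have : p⁻¹ + (1:ℝ≥0∞)⁻¹ = 0 + 1⁻¹ := by simpa [add_comm] using hpq
    have h0 : p⁻¹ = 0 := (ENNReal.add_left_inj (by simp)).mp this
    simpa [ENNReal.inv_eq_zero] using h0
  right; right
  have hplt : 1 < p := lt_of_le_of_ne hp1 (Ne.symm hp)
  have hqlt : 1 < q := lt_of_le_of_ne hq1 (Ne.symm hq)
  have hpt : p ≠ ∞ := by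
    rintro rfl
    simp only [ENNReal.inv_top, zero_add] at hpq
    exact hq (by simpa [ENNReal.inv_eq_one] using hpq)
  have hqt : q ≠ ∞ := by
    rintro rfl
    simp only [ENNReal.inv_top, add_zero] at hpq
    exact hp (by simpa [ENNReal.inv_eq_one] using hpq)
  refine ⟨hpt, hqt, Real.holderConjugate_iff.mpr ⟨?_, ?_⟩⟩
  · exact (ENNReal.toReal_lt_toReal (by simp) hpt).mpr hplt
  · have hpinv : p⁻¹ ≠ ∞ := by simpa using (zero_lt_one.trans hplt).ne'
    have hqinv : q⁻¹ ≠ ∞ := by simpa using (zero_lt_one.trans hqlt).ne'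
    have := congrArg ENNReal.toReal hpq
    rwa [ENNReal.toReal_add hpinv hqinv, ENNReal.toReal_inv, ENNReal.toReal_inv,
      ENNReal.toReal_one] at this

lemma abs_le_lpNorm_top (x : Fin κ → ℝ) (i : Fin κ) : |x i| ≤ lpNorm ∞ x := by
  rw [lpNorm_top]
  exact le_ciSup (f := fun j => |x j|) (Set.Finite.bddAbove (Set.finite_range _)) i

lemma one_top_holder (x y : Fin κ → ℝ) : x ⬝ᵥ y ≤ lpNorm 1 x * lpNorm ∞ y := by
  rw [lpNorm_one]
  calc x ⬝ᵥ y = ∑ i, x i * y i := rfl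
    _ ≤ ∑ i, |x i| * lpNorm ∞ y := by
        refine Finset.sum_le_sum fun i _ => ?_
        calc x i * y i ≤ |x i * y i| := le_abs_self _
          _ = |x i| * |y i| := abs_mul _ _
          _ ≤ |x i| * lpNorm ∞ y := by
              exact mul_le_mul_of_nonneg_left (abs_le_lpNorm_top y i) (abs_nonneg _)
    _ = (∑ i, |x i|) * lpNorm ∞ y := by rw [Finset.sum_mul]

lemma holder {p q : ℝ≥0∞} [Fact (1 ≤ p)] [Fact (1 ≤ q)] (hpq : p⁻¹ + q⁻¹ = 1)
    (x y : Fin κ → ℝ) : x ⬝ᵥ y ≤ lpNorm p x * lpNorm q y := by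
  rcases conj_cases hpq with ⟨hp, hq⟩ | ⟨hp, hq⟩ | ⟨hp, hq, hc⟩
  · subst hp; subst hq; exact one_top_holder x y
  · subst hp; subst hq
    rw [mul_comm, dotProduct_comm]
    exact one_top_holder y x
  · rw [lpNorm_eq_sum hp, lpNorm_eq_sum hq]
    exact Real.inner_le_Lp_mul_Lq Finset.univ x y hc

lemma exists_dual {p q : ℝ≥0∞} [Fact (1 ≤ p)] [Fact (1 ≤ q)] (hpq : p⁻¹ + q⁻¹ = 1)
    (x : Fin κ → ℝ) : ∃ g : Fin κ → ℝ, lpNorm q g ≤ 1 ∧ g ⬝ᵥ x = lpNorm p x := by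
  by_cases hx : x = 0
  · subst hx
    exact ⟨0, by rw [lpNorm_zero]; norm_num, by simp [lpNorm_zero]⟩
  obtain ⟨iw, hiw⟩ : ∃ i, x i ≠ 0 := Function.ne_iff.mp hx
  haveI : Nonempty (Fin κ) := ⟨iw⟩
  rcases conj_cases hpq with ⟨hp, hq⟩ | ⟨hp, hq⟩ | ⟨hp, hq, hc⟩
  · -- p = 1, q = ∞
    subst hp; subst hq
    refine ⟨fun i => if x i < 0 then -1 else 1, ?_, ?_⟩
    · rw [lpNorm_top]
      refine ciSup_le fun i => ?_
      by_cases h : x i < 0 <;> simp [h]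
    · rw [lpNorm_one]
      refine Finset.sum_congr rfl fun i _ => ?_
      by_cases h : x i < 0
      · simp [h, abs_of_neg h]
      · simp [h, abs_of_nonneg (not_lt.mp h)]
  · -- p = ∞, q = 1
    subst hp; subst hq
    obtain ⟨i₀, hi₀⟩ := Finite.exists_max fun i => |x i|
    set s : ℝ := if x i₀ < 0 then -1 else 1 with hs
    have hsx : s * x i₀ = |x i₀| := by
      by_cases h : x i₀ < 0
      · simp [hs, h, abs_of_neg h]
      · simp [hs, h, abs_of_nonneg (not_lt.mp h)]
    have habs : |s| = 1 := by by_cases h : x i₀ < 0 <;> simp [hs, h]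
    refine ⟨fun j => if j = i₀ then s else 0, ?_, ?_⟩
    · rw [lpNorm_one]
      have : ∀ j, |if j = i₀ then s else 0| = if j = i₀ then |s| else 0 := by
        intro j; by_cases h : j = i₀ <;> simp [h]
      simp only [this, Finset.sum_ite_eq', Finset.mem_univ, if_true, habs, le_refl]
    · have h1 : (fun j => if j = i₀ then s else 0) ⬝ᵥ x = s * x i₀ := by
        simp [dotProduct, ite_mul]
      rw [h1, hsx, lpNorm_top]
      refine le_antisymm (le_ciSup (f := fun j => |x j|)
        (Set.Finite.bddAbove (Set.finite_range _)) i₀) (ciSup_le hi₀)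
  · -- 1 < p < ∞
    set pr := p.toReal with hpr
    set qr := q.toReal with hqr
    have hpr1 : 1 < pr := hc.lt
    have hpr0 : 0 < pr := hc.pos
    have hqr0 : 0 < qr := hc.symm.pos
    set N := lpNorm p x with hNdef
    have hN : 0 < N := lpNorm_pos hx
    have hNp : N ^ pr = ∑ i, |x i| ^ pr := by
      have h0 : (0:ℝ) ≤ ∑ i, |x i| ^ pr :=
        Finset.sum_nonneg fun i _ => Real.rpow_nonneg (abs_nonneg _) _
      rw [hNdef, lpNorm_eq_sum hp x, ← hpr, ← Real.rpow_mul h0, one_div,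
        inv_mul_cancel₀ hpr0.ne', Real.rpow_one]
    set s : Fin κ → ℝ := fun i => if x i < 0 then -1 else 1 with hsdef
    have hsx : ∀ i, s i * x i = |x i| := by
      intro i
      by_cases h : x i < 0
      · simp [hsdef, h, abs_of_neg h]
      · simp [hsdef, h, abs_of_nonneg (not_lt.mp h)]
    have habs : ∀ i, |s i| = 1 := by
      intro i; by_cases h : x i < 0 <;> simp [hsdef, h]
    have hNpow : (0:ℝ) < N ^ (pr - 1) := Real.rpow_pos_of_pos hN _
    refine ⟨fun i => s i * |x i| ^ (pr - 1) / N ^ (pr - 1), ?_, ?_⟩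
    · have hg : ∀ i, |s i * |x i| ^ (pr - 1) / N ^ (pr - 1)| ^ qr
          = |x i| ^ pr / N ^ pr := by
        intro i
        rw [abs_div, abs_mul, habs i, one_mul, abs_of_nonneg (Real.rpow_nonneg (abs_nonneg _) _),
          abs_of_nonneg hNpow.le, Real.div_rpow (Real.rpow_nonneg (abs_nonneg _) _) hNpow.le,
          ← Real.rpow_mul (abs_nonneg _), ← Real.rpow_mul hN.le, hc.sub_one_mul_conj]
      rw [lpNorm_eq_sum hq]
      simp only [← hqr, hg]
      rw [← Finset.sum_div, ← hNp, div_self (Real.rpow_pos_of_pos hN _).ne', Real.one_rpow]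
    · have hterm : ∀ i, (s i * |x i| ^ (pr - 1) / N ^ (pr - 1)) * x i
          = |x i| ^ pr / N ^ (pr - 1) := by
        intro i
        have h1 : |x i| ^ pr = |x i| * |x i| ^ (pr - 1) := by
          have h2 := Real.rpow_add' (abs_nonneg (x i))
            (show (1:ℝ) + (pr - 1) ≠ 0 by simpa using hpr0.ne')
          rw [Real.rpow_one] at h2
          have h3 : (1:ℝ) + (pr - 1) = pr := by ring
          rwa [h3] at h2
        calc (s i * |x i| ^ (pr - 1) / N ^ (pr - 1)) * x i
            = (s i * x i) * |x i| ^ (pr - 1) / N ^ (pr - 1) := by ring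
          _ = |x i| * |x i| ^ (pr - 1) / N ^ (pr - 1) := by rw [hsx i]
          _ = |x i| ^ pr / N ^ (pr - 1) := by rw [← h1]
      calc (fun i => s i * |x i| ^ (pr - 1) / N ^ (pr - 1)) ⬝ᵥ x
          = ∑ i, |x i| ^ pr / N ^ (pr - 1) := Finset.sum_congr rfl fun i _ => hterm i
        _ = N ^ pr / N ^ (pr - 1) := by rw [← Finset.sum_div, hNp]
        _ = N := by
            rw [← Real.rpow_sub hN]
            norm_num

lemma quad_continuous (A : Matrix (Fin κ) (Fin κ) ℝ) :
    Continuous fun h : Fin κ → ℝ => h ⬝ᵥ A.mulVec h := by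
  show Continuous fun h : Fin κ → ℝ => ∑ i, h i * ∑ j, A i j * h j
  exact continuous_finset_sum _ fun i _ =>
    (continuous_apply i).mul
      (continuous_finset_sum _ fun j _ => continuous_const.mul (continuous_apply j))

lemma bilin_symm {Γ : Matrix (Fin κ) (Fin κ) ℝ} (hΓ : Γ.IsHermitian)
    (u v : Fin κ → ℝ) : u ⬝ᵥ Γ.mulVec v = v ⬝ᵥ Γ.mulVec u := by
  have hT : Γᵀ = Γ := by
    have := hΓ
    rwa [Matrix.IsHermitian, Matrix.conjTranspose_eq_transpose_of_trivial] at this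
  rw [dotProduct_mulVec, ← hT, vecMul_transpose, hT, dotProduct_comm]

lemma quad_smul (A : Matrix (Fin κ) (Fin κ) ℝ) (c : ℝ) (v : Fin κ → ℝ) :
    (c • v) ⬝ᵥ A.mulVec (c • v) = c ^ 2 * (v ⬝ᵥ A.mulVec v) := by
  rw [Matrix.mulVec_smul, dotProduct_smul, smul_dotProduct]
  simp [smul_eq_mul]
  ring

lemma quad_nonneg {Γ : Matrix (Fin κ) (Fin κ) ℝ} (hΓ : Γ.PosDef) (w : Fin κ → ℝ) :
    0 ≤ w ⬝ᵥ Γ.mulVec w := by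
  simpa using hΓ.posSemidef.dotProduct_mulVec_nonneg w

lemma quad_pos {Γ : Matrix (Fin κ) (Fin κ) ℝ} (hΓ : Γ.PosDef) {w : Fin κ → ℝ} (hw : w ≠ 0) :
    0 < w ⬝ᵥ Γ.mulVec w := by
  simpa using hΓ.dotProduct_mulVec_pos hw

lemma cauchy_schwarz {Γ : Matrix (Fin κ) (Fin κ) ℝ} (hΓ : Γ.PosDef) (u v : Fin κ → ℝ) :
    (u ⬝ᵥ Γ.mulVec v) ^ 2 ≤ (u ⬝ᵥ Γ.mulVec u) * (v ⬝ᵥ Γ.mulVec v) := by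
  have key : ∀ t : ℝ, 0 ≤ (v ⬝ᵥ Γ.mulVec v) * (t * t) + (2 * (u ⬝ᵥ Γ.mulVec v)) * t
      + (u ⬝ᵥ Γ.mulVec u) := by
    intro t
    have h0 := quad_nonneg hΓ (u + t • v)
    have hexp : (u + t • v) ⬝ᵥ Γ.mulVec (u + t • v)
        = (v ⬝ᵥ Γ.mulVec v) * (t * t) + (2 * (u ⬝ᵥ Γ.mulVec v)) * t + (u ⬝ᵥ Γ.mulVec u) := by
      simp only [Matrix.mulVec_add, Matrix.mulVec_smul, dotProduct_add, add_dotProduct,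
        dotProduct_smul, smul_dotProduct, smul_eq_mul]
      rw [bilin_symm hΓ.1 v u]
      ring
    rwa [hexp] at h0
  have hd := discrim_le_zero key
  rw [discrim] at hd
  nlinarith [hd]

end StmtAux

open StmtAux
theorem stmt8 (κ : ℕ) (hκ : 0 < κ) (p q : ℝ≥0∞) [Fact (1 ≤ p)] [Fact (1 ≤ q)]
    (hpq : p⁻¹ + q⁻¹ = 1)
    (Γ : Matrix (Fin κ) (Fin κ) ℝ) (hΓ : Γ.PosDef) :
    sInf {r : ℝ | ∃ h : Fin κ → ℝ, lpNorm p h = 1 ∧ r = h ⬝ᵥ Γ.mulVec h} =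
      (sSup {r : ℝ | ∃ g : Fin κ → ℝ, lpNorm q g ≤ 1 ∧ r = g ⬝ᵥ Γ⁻¹.mulVec g})⁻¹ := by
  classical
  have hΓinv : Γ⁻¹.PosDef := hΓ.inv
  have hGG : ∀ w : Fin κ → ℝ, Γ.mulVec (Γ⁻¹.mulVec w) = w := by
    intro w
    rw [Matrix.mulVec_mulVec, Matrix.mul_nonsing_inv Γ
      ((Matrix.isUnit_iff_isUnit_det Γ).mp hΓ.isUnit), Matrix.one_mulVec]
  -- a unit vector
  set e : Fin κ → ℝ := Pi.single (⟨0, hκ⟩ : Fin κ) 1 with hedef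
  have he : e ≠ 0 := by
    intro h
    have := congrFun h ⟨0, hκ⟩
    simp [hedef] at this
  have hep : 0 < lpNorm p e := lpNorm_pos he
  have heq : 0 < lpNorm q e := lpNorm_pos he
  -- the sphere is compact and nonempty
  have hScl : IsClosed {h : Fin κ → ℝ | lpNorm p h = 1} :=
    isClosed_eq (lpNorm_continuous p) continuous_const
  have hSc : IsCompact {h : Fin κ → ℝ | lpNorm p h = 1} :=
    (isCompact_ball p).of_isClosed_subset hScl (fun h hh => le_of_eq hh)
  have hh₁ : lpNorm p ((lpNorm p e)⁻¹ • e) = 1 := by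
    rw [lpNorm_smul, abs_of_pos (inv_pos.mpr hep), inv_mul_cancel₀ hep.ne']
  obtain ⟨h₀, h₀S, h₀min⟩ := hSc.exists_isMinOn ⟨(lpNorm p e)⁻¹ • e, hh₁⟩
    (quad_continuous Γ).continuousOn
  -- the ball is compact and nonempty
  obtain ⟨g₀, g₀B, g₀max⟩ := (isCompact_ball q).exists_isMaxOn
    ⟨0, by simp [lpNorm_zero]⟩ (quad_continuous Γ⁻¹).continuousOn
  have h₀S' : lpNorm p h₀ = 1 := h₀S
  have g₀B' : lpNorm q g₀ ≤ 1 := g₀B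
  have h₀ne : h₀ ≠ 0 := by
    intro h
    rw [h, lpNorm_zero] at h₀S'
    norm_num at h₀S'
  have hm : 0 < h₀ ⬝ᵥ Γ.mulVec h₀ := quad_pos hΓ h₀ne
  -- the max M is positive
  set M := g₀ ⬝ᵥ Γ⁻¹.mulVec g₀ with hMdef
  have hM : 0 < M := by
    have hmem : lpNorm q ((lpNorm q e)⁻¹ • e) ≤ 1 := by
      rw [lpNorm_smul, abs_of_pos (inv_pos.mpr heq), inv_mul_cancel₀ heq.ne']
    have hval : 0 < ((lpNorm q e)⁻¹ • e) ⬝ᵥ Γ⁻¹.mulVec ((lpNorm q e)⁻¹ • e) :=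
      quad_pos hΓinv (by
        intro h
        rcases smul_eq_zero.mp h with h' | h'
        · exact absurd h' (inv_pos.mpr heq).ne'
        · exact he h')
    exact lt_of_lt_of_le hval (g₀max hmem)
  -- identify the sInf and sSup
  have hInf : sInf {r : ℝ | ∃ h : Fin κ → ℝ, lpNorm p h = 1 ∧ r = h ⬝ᵥ Γ.mulVec h}
      = h₀ ⬝ᵥ Γ.mulVec h₀ := by
    refine IsLeast.csInf_eq ⟨⟨h₀, h₀S', rfl⟩, ?_⟩
    rintro r ⟨h, hh, rfl⟩
    exact h₀min hh
  have hSup : sSup {r : ℝ | ∃ g : Fin κ → ℝ, lpNorm q g ≤ 1 ∧ r = g ⬝ᵥ Γ⁻¹.mulVec g}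
      = M := by
    refine IsGreatest.csSup_eq ⟨⟨g₀, g₀B', rfl⟩, ?_⟩
    rintro r ⟨g, hg, rfl⟩
    exact g₀max hg
  rw [hInf, hSup]
  -- direction 1 : h₀ᵀ Γ h₀ ≥ M⁻¹
  have dir1 : M⁻¹ ≤ h₀ ⬝ᵥ Γ.mulVec h₀ := by
    obtain ⟨g, hgq, hgx⟩ := exists_dual hpq h₀
    rw [h₀S'] at hgx
    set u := Γ⁻¹.mulVec g with hudef
    have hgu : Γ.mulVec u = g := hGG g
    have h1 : u ⬝ᵥ Γ.mulVec h₀ = g ⬝ᵥ h₀ := by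
      rw [bilin_symm hΓ.1 u h₀, hgu, dotProduct_comm]
    have h2 : u ⬝ᵥ Γ.mulVec u = g ⬝ᵥ Γ⁻¹.mulVec g := by
      conv_lhs => rw [hgu]
      rw [← hudef]
      exact dotProduct_comm u g
    have hcs := cauchy_schwarz hΓ u h₀
    rw [h1, hgx, h2] at hcs
    have hgM : g ⬝ᵥ Γ⁻¹.mulVec g ≤ M := g₀max hgq
    have h3 : 1 ≤ M * (h₀ ⬝ᵥ Γ.mulVec h₀) := by nlinarith
    rw [inv_eq_one_div, div_le_iff₀ hM]
    linarith [h3]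
  -- direction 2 : h₀ᵀ Γ h₀ ≤ M⁻¹
  have dir2 : h₀ ⬝ᵥ Γ.mulVec h₀ ≤ M⁻¹ := by
    have hg₀ne : g₀ ≠ 0 := by
      rintro rfl
      rw [hMdef] at hM
      simp at hM
    set u := Γ⁻¹.mulVec g₀ with hudef
    have hgu : Γ.mulVec u = g₀ := hGG g₀
    have hMu : g₀ ⬝ᵥ u = M := by rw [hudef, hMdef]
    have hu0 : u ≠ 0 := by
      intro h
      rw [hudef] at h
      rw [hMdef] at hM
      have : g₀ ⬝ᵥ Γ⁻¹.mulVec g₀ = 0 := by rw [h, dotProduct_zero]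
      exact hM.ne' this
    have hLu : 0 < lpNorm p u := lpNorm_pos hu0
    have hq' : q⁻¹ + p⁻¹ = 1 := by rw [add_comm]; exact hpq
    have hMle : M ≤ lpNorm p u := by
      calc M = g₀ ⬝ᵥ u := hMu.symm
        _ ≤ lpNorm q g₀ * lpNorm p u := holder hq' g₀ u
        _ ≤ 1 * lpNorm p u := mul_le_mul_of_nonneg_right g₀B' hLu.le
        _ = lpNorm p u := one_mul _
    have hmemS : lpNorm p ((lpNorm p u)⁻¹ • u) = 1 := by
      rw [lpNorm_smul, abs_of_pos (inv_pos.mpr hLu), inv_mul_cancel₀ hLu.ne']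
    have hval : ((lpNorm p u)⁻¹ • u) ⬝ᵥ Γ.mulVec ((lpNorm p u)⁻¹ • u)
        = ((lpNorm p u)⁻¹) ^ 2 * M := by
      rw [quad_smul]
      congr 1
      conv_lhs => rw [bilin_symm hΓ.1 u u]
      rw [hgu, dotProduct_comm u g₀, hMu]
    have hle : h₀ ⬝ᵥ Γ.mulVec h₀ ≤ ((lpNorm p u)⁻¹) ^ 2 * M := by
      rw [← hval]
      exact h₀min hmemS
    refine hle.trans ?_
    have hinv : (lpNorm p u)⁻¹ ≤ M⁻¹ := inv_anti₀ hM hMle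
    have h1 : (lpNorm p u)⁻¹ * M ≤ M⁻¹ * M := mul_le_mul_of_nonneg_right hinv hM.le
    calc (lpNorm p u)⁻¹ ^ 2 * M = (lpNorm p u)⁻¹ * ((lpNorm p u)⁻¹ * M) := by ring
      _ ≤ M⁻¹ * (M⁻¹ * M) := mul_le_mul hinv h1 (by positivity) (by positivity)
      _ = M⁻¹ := by field_simp
  exact le_antisymm dir2 dir1
end

section
/- Let $\zeta = (\zeta_1,\ldots,\zeta_L)$ be independent Poisson random variables with $\zeta_k \sim \mathrm{Poisson}(\nu_k)$, $\nu_k \ge 0$, and suppose $\max_k \nu_k \le \chi$. Then for every $h \in \mathbb{R}^L$, $\ln \mathbb{E}[\exp(h^T\zeta)] \le h^T\nu + \chi\,(e^{\|h\|_1} - \|h\|_1 - 1)$. -/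
open MeasureTheory ProbabilityTheory
open scoped NNReal

lemma exp_tsum_real (x : ℝ) : ∑' n : ℕ, x ^ n / (Nat.factorial n : ℝ) = Real.exp x := by
  rw [Real.exp_eq_exp_ℝ, NormedSpace.exp_eq_tsum_div]

lemma poisson_mgf (ν : ℝ≥0) (t : ℝ) :
    ∫ n : ℕ, Real.exp (t * n) ∂(poissonMeasure ν) = Real.exp (ν * (Real.exp t - 1)) := by
  have hsum : Summable (fun n : ℕ => Real.exp (t * n) * poissonPMFReal ν n) := by
    have : (fun n : ℕ => Real.exp (t * n) * poissonPMFReal ν n)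
        = fun n : ℕ => Real.exp (-ν) * (((ν : ℝ) * Real.exp t) ^ n / (Nat.factorial n : ℝ)) := by
      funext n
      unfold poissonPMFReal
      rw [mul_comm t (n : ℝ), Real.exp_nat_mul, mul_pow]
      ring
    rw [this]
    exact (Real.summable_pow_div_factorial _).mul_left _
  have htsum : ∑' n : ℕ, Real.exp (t * n) * poissonPMFReal ν n
      = Real.exp (ν * (Real.exp t - 1)) := by
    have h1 : (fun n : ℕ => Real.exp (t * n) * poissonPMFReal ν n)
        = fun n : ℕ => Real.exp (-ν) * (((ν : ℝ) * Real.exp t) ^ n / (Nat.factorial n : ℝ)) := by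
      funext n
      unfold poissonPMFReal
      rw [mul_comm t (n : ℝ), Real.exp_nat_mul, mul_pow]
      ring
    rw [h1, tsum_mul_left, exp_tsum_real, ← Real.exp_add]
    ring_nf
  have hnonneg : ∀ n : ℕ, 0 ≤ Real.exp (t * n) * poissonPMFReal ν n :=
    fun n => mul_nonneg (Real.exp_pos _).le poissonPMFReal_nonneg
  rw [integral_eq_lintegral_of_nonneg_ae (Filter.Eventually.of_forall fun n => (Real.exp_pos _).le)
      (measurable_from_top.aestronglyMeasurable)]
  rw [lintegral_countable']
  have hsingle : ∀ n : ℕ, poissonMeasure ν {n} = ENNReal.ofReal (poissonPMFReal ν n) := by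
    intro n
    rw [poissonMeasure_singleton]
    rfl
  have : ∑' n : ℕ, ENNReal.ofReal (Real.exp (t * n)) * poissonMeasure ν {n}
      = ENNReal.ofReal (Real.exp (ν * (Real.exp t - 1))) := by
    rw [← htsum, ENNReal.ofReal_tsum_of_nonneg hnonneg hsum]
    congr 1
    funext n
    rw [hsingle n, ← ENNReal.ofReal_mul (Real.exp_pos _).le]
  rw [this, ENNReal.toReal_ofReal (Real.exp_pos _).le]

lemma f_nonneg (x : ℝ) : 0 ≤ Real.exp x - x - 1 := by
  have := Real.add_one_le_exp x
  linarith

lemma f_le_f_abs (x : ℝ) : Real.exp x - x - 1 ≤ Real.exp |x| - |x| - 1 := by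
  rcases le_or_gt 0 x with hx | hx
  · rw [abs_of_nonneg hx]
  · rw [abs_of_neg hx]
    have h : (-x) < Real.sinh (-x) := Real.self_lt_sinh_iff.mpr (by linarith)
    rw [Real.sinh_eq, neg_neg] at h
    linarith

lemma f_superadd {ι : Type*} (s : Finset ι) (g : ι → ℝ) (hg : ∀ i, 0 ≤ g i) :
    ∑ i ∈ s, (Real.exp (g i) - g i - 1) ≤
      Real.exp (∑ i ∈ s, g i) - (∑ i ∈ s, g i) - 1 := by
  classical
  induction s using Finset.cons_induction with
  | empty => simp
  | cons a s ha ih =>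
    simp only [Finset.sum_cons]
    have hS : 0 ≤ ∑ i ∈ s, g i := Finset.sum_nonneg fun i _ => hg i
    have h1 : Real.exp (g a) + Real.exp (∑ i ∈ s, g i)
        ≤ Real.exp (g a + ∑ i ∈ s, g i) + 1 := by
      rw [Real.exp_add]
      nlinarith [Real.one_le_exp (hg a), Real.one_le_exp hS]
    linarith

theorem stmt14 {Ω : Type*} [MeasurableSpace Ω] (μ : Measure Ω) [IsProbabilityMeasure μ]
    (L : ℕ) (ζ : Fin L → Ω → ℕ) (hmeas : ∀ k, Measurable (ζ k))
    (hindep : iIndepFun ζ μ)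
    (ν : Fin L → ℝ≥0)
    (hlaw : ∀ k, Measure.map (ζ k) μ = poissonMeasure (ν k))
    (χ : ℝ) (hχ : ∀ k, (ν k : ℝ) ≤ χ) :
    ∀ h : Fin L → ℝ,
      Real.log (∫ ω, Real.exp (∑ k, h k * (ζ k ω : ℝ)) ∂μ) ≤
        (∑ k, h k * (ν k : ℝ)) +
          χ * (Real.exp (∑ k, |h k|) - (∑ k, |h k|) - 1) := by
  intro h
  set X : Fin L → Ω → ℝ := fun k ω => h k * (ζ k ω : ℝ) with hX
  have hXmeas : ∀ k, Measurable (X k) := fun k =>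
    (measurable_from_top.comp (hmeas k)).const_mul (h k)
  have hXindep : iIndepFun X μ :=
    hindep.comp (fun k (n : ℕ) => h k * (n : ℝ)) (fun k => measurable_from_top)
  have hmgf : ∀ k, mgf (X k) μ 1 = Real.exp ((ν k : ℝ) * (Real.exp (h k) - 1)) := by
    intro k
    have : mgf (X k) μ 1 = ∫ ω, Real.exp (h k * (ζ k ω : ℝ)) ∂μ := by
      simp [mgf, hX]
    rw [this]
    have hchg : ∫ ω, Real.exp (h k * (ζ k ω : ℝ)) ∂μ
        = ∫ n : ℕ, Real.exp (h k * n) ∂(Measure.map (ζ k) μ) := by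
      rw [integral_map (hmeas k).aemeasurable measurable_from_top.aestronglyMeasurable]
    rw [hchg, hlaw k, poisson_mgf]
  have hint : ∫ ω, Real.exp (∑ k, h k * (ζ k ω : ℝ)) ∂μ
      = Real.exp (∑ k, (ν k : ℝ) * (Real.exp (h k) - 1)) := by
    have h1 : ∫ ω, Real.exp (∑ k, h k * (ζ k ω : ℝ)) ∂μ = mgf (∑ k, X k) μ 1 := by
      simp [mgf, hX]
    have h2 : ∏ k, mgf (X k) μ 1 = ∏ k, Real.exp ((ν k : ℝ) * (Real.exp (h k) - 1)) :=
      Finset.prod_congr rfl fun k _ => hmgf k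
    rw [h1, hXindep.mgf_sum hXmeas, h2, ← Real.exp_sum]
  rw [hint, Real.log_exp]
  -- now the analytic inequality
  have key : ∑ k, (ν k : ℝ) * (Real.exp (h k) - h k - 1)
      ≤ χ * (Real.exp (∑ k, |h k|) - (∑ k, |h k|) - 1) := by
    rcases Nat.eq_zero_or_pos L with hL | hL
    · subst hL
      simp
    · have hχ0 : 0 ≤ χ := le_trans (ν ⟨0, hL⟩).coe_nonneg (hχ ⟨0, hL⟩)
      calc ∑ k, (ν k : ℝ) * (Real.exp (h k) - h k - 1)
          ≤ ∑ k, χ * (Real.exp (|h k|) - |h k| - 1) := by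
            apply Finset.sum_le_sum
            intro k _
            have := f_le_f_abs (h k)
            have h2 := f_nonneg (h k)
            have h3 := f_nonneg (|h k|)
            nlinarith [hχ k, (ν k).coe_nonneg]
        _ = χ * ∑ k, (Real.exp (|h k|) - |h k| - 1) := by rw [Finset.mul_sum]
        _ ≤ χ * (Real.exp (∑ k, |h k|) - (∑ k, |h k|) - 1) := by
            apply mul_le_mul_of_nonneg_left _ hχ0
            exact f_superadd Finset.univ (fun k => |h k|) (fun k => abs_nonneg _)
  have expand : ∑ k, (ν k : ℝ) * (Real.exp (h k) - 1)
      = (∑ k, h k * (ν k : ℝ)) + ∑ k, (ν k : ℝ) * (Real.exp (h k) - h k - 1) := by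
    rw [← Finset.sum_add_distrib]
    exact Finset.sum_congr rfl fun k _ => by ring
  rw [expand]
  linarith
end
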